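/- Let f : X → ℝ ∪ {+∞} be a proper convex function on a locally convex space X, continuous at a point x, and let ℓ ≥ 0. Then the ε-subdifferential ∂_ℓ f(x) is nonempty, convex, weak*-compact, and its support function satisfies σ_{∂_ℓ f(x)}(u) = inf_{λ>0} (f(x + λu) − f(x) + ℓ)/λ for every u ∈ X. -/

import Mathlib

open Set
noncomputable section

variable {X : Type*} [AddCommGroup X] [Module ℝ X] [TopologicalSpace X]

/-- The `ℓ`-subdifferential of `f : X → ℝ ∪ {+∞}` at `x`, as a subset of the dual `X*`
endowed with its weak* topology:
`∂_ℓ f(x) = {x* : ⟨x*, y − x⟩ ≤ f(y) − f(x) + ℓ for all y}`. -/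
def epsSubdiff (f : X → EReal) (x : X) (l : ℝ) : Set (WeakDual ℝ X) :=
  {p | ∀ y : X, ((p y : EReal) - (p x : EReal)) ≤ f y - f x + (l : EReal)}

set_option maxHeartbeats 1000000 in
/-- If `f` is a proper convex function on a locally convex space, continuous (and finite) at
`x`, and `ℓ ≥ 0`, then `∂_ℓ f(x)` is nonempty, convex and weak*-compact, and its support
function is given by `σ_{∂_ℓ f(x)}(u) = inf_{λ>0} (f(x+λu) − f(x) + ℓ)/λ`. -/
theorem epsSubdiff_nonempty_convex_isCompact_and_support
    [IsTopologicalAddGroup X] [ContinuousSMul ℝ X] [LocallyConvexSpace ℝ X]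
    (f : X → EReal) (x : X) (l : ℝ) (hl : 0 ≤ l)
    (hproper : ∀ y : X, f y ≠ ⊥)
    (hconv : Convex ℝ {p : X × ℝ | f p.1 ≤ (p.2 : EReal)})
    (hfin : f x ≠ ⊤) (hcont : ContinuousAt f x) :
    (epsSubdiff f x l).Nonempty ∧
    Convex ℝ (epsSubdiff f x l) ∧
    IsCompact (epsSubdiff f x l) ∧
    (∀ u : X, (⨆ p ∈ epsSubdiff f x l, (p u : EReal)) =
      ⨅ lam : Ioi (0 : ℝ), (((lam.1)⁻¹ : ℝ) : EReal) * (f (x + lam.1 • u) - f x + (l : EReal))) := by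
  classical
  open Topology Pointwise Filter in
  obtain ⟨r, hr⟩ : ∃ r : ℝ, f x = (r : EReal) :=
    ⟨(f x).toReal, (EReal.coe_toReal hfin (hproper x)).symm⟩
  set S := epsSubdiff f x l with hSdef
  set φ : X → ℝ → EReal :=
    fun u t => ((t⁻¹ : ℝ) : EReal) * (f (x + t • u) - f x + (l : EReal)) with hφ
  -- a neighborhood of 0 on which f (x + ·) is finite and close to r
  obtain ⟨V, hV0, hVf⟩ : ∃ V : Set X, V ∈ 𝓝 (0 : X) ∧
      ∀ u ∈ V, f (x + u) ∈ Ioo ((r - 1 : ℝ) : EReal) ((r + 1 : ℝ) : EReal) := by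
    have hmemx : f x ∈ Ioo ((r - 1 : ℝ) : EReal) ((r + 1 : ℝ) : EReal) := by
      rw [hr]
      exact ⟨by exact_mod_cast (by linarith : r - 1 < r),
        by exact_mod_cast (by linarith : r < r + 1)⟩
    have h1 : f ⁻¹' (Ioo ((r - 1 : ℝ) : EReal) ((r + 1 : ℝ) : EReal)) ∈ 𝓝 x :=
      hcont.preimage_mem_nhds (isOpen_Ioo.mem_nhds hmemx)
    have h2 : (fun u : X => x + u) ⁻¹'
        (f ⁻¹' (Ioo ((r - 1 : ℝ) : EReal) ((r + 1 : ℝ) : EReal))) ∈ 𝓝 (0 : X) := by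
      apply (continuous_const.add continuous_id).continuousAt.preimage_mem_nhds
      simpa using h1
    exact ⟨_, h2, fun u hu => hu⟩
  have hdelta : ∀ u : X, ∃ δ > (0:ℝ), ∀ t : ℝ, |t| < δ → t • u ∈ V := by
    intro u
    have hc : Continuous fun t : ℝ => t • u := continuous_id.smul continuous_const
    have h1 : (fun t : ℝ => t • u) ⁻¹' V ∈ 𝓝 (0 : ℝ) :=
      hc.continuousAt.preimage_mem_nhds (by simpa using hV0)
    obtain ⟨δ, hδ, hball⟩ := Metric.mem_nhds_iff.mp h1
    exact ⟨δ, hδ, fun t ht => hball (by simpa [Real.dist_eq] using ht)⟩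
  -- real-valued consequence of convexity
  have hcx : ∀ (a b : X) (ra rb t : ℝ), f a ≤ (ra : EReal) → f b ≤ (rb : EReal) →
      0 ≤ t → t ≤ 1 → f ((1 - t) • a + t • b) ≤ (((1 - t) * ra + t * rb : ℝ) : EReal) := by
    intro a b ra rb t ha hb h0 h1
    have := hconv (show (a, ra) ∈ _ from ha) (show (b, rb) ∈ _ from hb)
      (by linarith : (0:ℝ) ≤ 1 - t) h0 (by ring)
    simpa [Prod.smul_def, smul_eq_mul] using this
  have hmul_le : ∀ (c : ℝ), 0 ≤ c → ∀ A B : EReal, A ≤ B →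
      ((c : ℝ) : EReal) * A ≤ ((c : ℝ) : EReal) * B := by
    intro c hc A B hAB
    rw [mul_comm ((c : ℝ) : EReal) A, mul_comm ((c : ℝ) : EReal) B]
    exact mul_le_mul_of_nonneg_right hAB (by exact_mod_cast hc)
  have hφ_eq : ∀ (u : X) (t : ℝ), 0 < t → ∀ a : ℝ, f (x + t • u) = (a : EReal) →
      φ u t = (((a - r + l) / t : ℝ) : EReal) := by
    intro u t ht a ha
    rw [hφ]
    simp only [ha, hr, ← EReal.coe_sub, ← EReal.coe_add, ← EReal.coe_mul]
    norm_cast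
    field_simp
  have hφ_le : ∀ (u : X) (t : ℝ), 0 < t → ∀ a : ℝ, f (x + t • u) ≤ (a : EReal) →
      φ u t ≤ (((a - r + l) / t : ℝ) : EReal) := by
    intro u t ht a ha
    have h1 : f (x + t • u) - f x + (l : EReal) ≤ ((a - r + l : ℝ) : EReal) := by
      rw [hr]
      calc f (x + t • u) - (r : EReal) + (l : EReal)
          ≤ (a : EReal) - (r : EReal) + (l : EReal) :=
            add_le_add (EReal.sub_le_sub ha le_rfl) le_rfl
        _ = ((a - r + l : ℝ) : EReal) := by norm_cast
    have h2 := hmul_le t⁻¹ (by positivity) _ _ h1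
    refine le_trans h2 ?_
    rw [← EReal.coe_mul]
    norm_cast
    rw [div_eq_inv_mul]
  have hφ_top : ∀ (u : X) (t : ℝ), 0 < t → f (x + t • u) = ⊤ → φ u t = ⊤ := by
    intro u t ht htop
    rw [hφ]
    simp only [htop, hr]
    rw [EReal.top_sub_coe, EReal.top_add_coe]
    exact EReal.coe_mul_top_of_pos (by positivity)
  have hfinV : ∀ u ∈ V, ∃ a : ℝ, f (x + u) = (a : EReal) := by
    intro u hu
    exact ⟨(f (x + u)).toReal,
      (EReal.coe_toReal (hVf u hu).2.ne_top (hproper _)).symm⟩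
  -- lower bound for φ
  have hlow : ∀ u : X, ∃ c : ℝ, ∀ t : ℝ, 0 < t → ((c : ℝ) : EReal) ≤ φ u t := by
    intro u
    obtain ⟨δ, hδ, hδV⟩ := hdelta u
    have hμ : (0:ℝ) < δ/2 := by positivity
    have hmem : (-(δ/2)) • u ∈ V := hδV _ (by rw [abs_neg, abs_of_pos hμ]; linarith)
    obtain ⟨s, hs⟩ := hfinV _ hmem
    refine ⟨(r - s)/(δ/2), ?_⟩
    intro t ht
    by_cases htop : f (x + t • u) = ⊤
    · rw [hφ_top u t ht htop]; exact le_top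
    · obtain ⟨a, ha⟩ : ∃ a : ℝ, f (x + t • u) = (a : EReal) :=
        ⟨(f (x + t • u)).toReal, (EReal.coe_toReal htop (hproper _)).symm⟩
      rw [hφ_eq u t ht a ha]
      norm_cast
      set θ : ℝ := (δ/2)/(t + δ/2) with hθdef
      have hts : (0:ℝ) < t + δ/2 := by linarith
      have hθ0 : 0 ≤ θ := by positivity
      have hθ1 : θ ≤ 1 := by rw [hθdef, div_le_one hts]; linarith
      have key := hcx (x + (-(δ/2)) • u) (x + t • u) s a θ hs.le ha.le hθ0 hθ1
      have hpt : (1 - θ) • (x + (-(δ/2)) • u) + θ • (x + t • u)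
          = x + ((1 - θ) * (-(δ/2)) + θ * t) • u := by module
      have hcoef : (1 - θ) * (-(δ/2)) + θ * t = 0 := by
        rw [hθdef]; field_simp; ring
      rw [hcoef, zero_smul, add_zero] at hpt
      rw [hpt, hr] at key
      have key2 : r ≤ (1 - θ) * s + θ * a := by exact_mod_cast key
      have hθval : θ * (t + δ/2) = δ/2 := by rw [hθdef]; field_simp
      have h1θ : (1 - θ) * (t + δ/2) = t := by rw [hθdef]; field_simp; ring
      rw [div_le_div_iff₀ hμ ht]
      have hlμ : 0 ≤ l * (δ/2) := mul_nonneg hl hμ.le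
      have key3 := mul_le_mul_of_nonneg_right key2 hts.le
      have e1 : ((1 - θ) * s + θ * a) * (t + δ/2)
          = ((1 - θ) * (t + δ/2)) * s + (θ * (t + δ/2)) * a := by ring
      rw [e1, h1θ, hθval] at key3
      linarith
  -- the infimum is a real number G u
  have hIle : ∀ (u : X) (t : ℝ), 0 < t →
      (⨅ lam : Ioi (0:ℝ), φ u lam.1) ≤ φ u t := by
    intro u t ht
    exact iInf_le _ (⟨t, ht⟩ : Ioi (0:ℝ))
  have hIreal : ∀ u : X, ∃ G : ℝ, (⨅ lam : Ioi (0:ℝ), φ u lam.1) = (G : EReal) := by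
    intro u
    obtain ⟨c, hc⟩ := hlow u
    obtain ⟨δ, hδ, hδV⟩ := hdelta u
    have hμ : (0:ℝ) < δ/2 := by positivity
    have hmem : (δ/2) • u ∈ V := hδV _ (by rw [abs_of_pos hμ]; linarith)
    obtain ⟨a, ha⟩ := hfinV _ hmem
    have h1 : (⨅ lam : Ioi (0:ℝ), φ u lam.1) ≤ (((a - r + l)/(δ/2) : ℝ) : EReal) :=
      (hIle u _ hμ).trans_eq (hφ_eq u _ hμ a ha)
    have h2 : ((c : ℝ) : EReal) ≤ (⨅ lam : Ioi (0:ℝ), φ u lam.1) :=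
      le_iInf fun lam => hc lam.1 lam.2
    refine ⟨(⨅ lam : Ioi (0:ℝ), φ u lam.1).toReal, (EReal.coe_toReal ?_ ?_).symm⟩
    · exact (h1.trans_lt (EReal.coe_lt_top _)).ne
    · exact ((EReal.bot_lt_coe c).trans_le h2).ne'
  choose G hG using hIreal
  have hGle : ∀ (u : X) (t : ℝ), 0 < t → ∀ a : ℝ, f (x + t • u) ≤ (a : EReal) →
      G u ≤ (a - r + l)/t := by
    intro u t ht a ha
    have h1 : ((G u : ℝ) : EReal) ≤ (((a - r + l)/t : ℝ) : EReal) :=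
      (hG u ▸ hIle u t ht).trans (hφ_le u t ht a ha)
    exact_mod_cast h1
  have happrox : ∀ (u : X) (ε : ℝ), 0 < ε → ∃ t : ℝ, 0 < t ∧
      ∃ a : ℝ, f (x + t • u) = (a : EReal) ∧ (a - r + l)/t ≤ G u + ε := by
    intro u ε hε
    have h1 : (⨅ lam : Ioi (0:ℝ), φ u lam.1) < ((G u + ε : ℝ) : EReal) := by
      rw [hG u]; exact_mod_cast (lt_add_of_pos_right _ hε)
    obtain ⟨lam, hlam⟩ := iInf_lt_iff.mp h1
    have ht : (0:ℝ) < lam.1 := lam.2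
    have hne : f (x + lam.1 • u) ≠ ⊤ := by
      intro htop
      rw [hφ_top u lam.1 ht htop] at hlam
      exact not_top_lt hlam
    obtain ⟨a, ha⟩ : ∃ a : ℝ, f (x + lam.1 • u) = (a : EReal) :=
      ⟨(f (x + lam.1 • u)).toReal, (EReal.coe_toReal hne (hproper _)).symm⟩
    rw [hφ_eq u lam.1 ht a ha] at hlam
    exact ⟨lam.1, ht, a, ha, by exact_mod_cast hlam.le⟩
  -- G 0 = 0
  have hG0 : G 0 = 0 := by
    have hx0 : ∀ t : ℝ, f (x + t • (0:X)) = (r : EReal) := by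
      intro t; rw [smul_zero, add_zero, hr]
    have hle : ∀ t : ℝ, 0 < t → G 0 ≤ l / t := by
      intro t ht
      have := hGle 0 t ht r (hx0 t).le
      simpa using this
    have h1 : G 0 ≤ 0 := by
      by_contra hcon
      push_neg at hcon
      have ht : (0:ℝ) < (l + G 0)/G 0 := div_pos (by linarith) hcon
      have h2 := hle _ ht
      rw [le_div_iff₀ ht] at h2
      have h3 : G 0 * ((l + G 0)/G 0) = l + G 0 := by field_simp
      rw [h3] at h2
      linarith
    have h2 : (0:ℝ) ≤ G 0 := by
      have h3 : ((0:ℝ) : EReal) ≤ ⨅ lam : Ioi (0:ℝ), φ 0 lam.1 := by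
        refine le_iInf fun lam => ?_
        have ht : (0:ℝ) < lam.1 := lam.2
        rw [hφ_eq 0 lam.1 ht r (hx0 lam.1)]
        exact_mod_cast div_nonneg (by linarith) ht.le
      rw [hG 0] at h3
      exact_mod_cast h3
    linarith
  -- subadditivity
  have hGadd : ∀ u v : X, G (u + v) ≤ G u + G v := by
    intro u v
    have key : ∀ ε : ℝ, 0 < ε → G (u + v) ≤ G u + G v + 2*ε := by
      intro ε hε
      obtain ⟨t, ht, a, ha, hta⟩ := happrox u ε hε
      obtain ⟨m, hm, b, hb, hmb⟩ := happrox v ε hε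
      have hts : (0:ℝ) < t + m := by linarith
      set θ : ℝ := t/(t + m) with hθdef
      have hθ0 : 0 ≤ θ := by positivity
      have hθ1 : θ ≤ 1 := by rw [hθdef, div_le_one hts]; linarith
      set τ : ℝ := t*m/(t + m) with hτdef
      have hτ : 0 < τ := by positivity
      have key2 := hcx (x + t • u) (x + m • v) a b θ ha.le hb.le hθ0 hθ1
      have hpt : (1 - θ) • (x + t • u) + θ • (x + m • v)
          = x + ((1 - θ) * t) • u + (θ * m) • v := by module
      have hc1 : (1 - θ) * t = τ := by
        rw [hθdef, hτdef]
        first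
        | (field_simp; ring)
        | field_simp
      have hc2 : θ * m = τ := by
        rw [hθdef, hτdef]
        first
        | (field_simp; ring)
        | field_simp
      rw [hc1, hc2] at hpt
      have hpt2 : x + τ • u + τ • v = x + τ • (u + v) := by module
      rw [hpt, hpt2] at key2
      have h3 := hGle (u + v) τ hτ _ key2
      have h4 : ((1 - θ) * a + θ * b - r + l)/τ = (a - r + l)/t + (b - r + l)/m := by
        rw [hθdef, hτdef]
        first
        | (field_simp; ring)
        | field_simp
      rw [h4] at h3
      linarith
    by_contra hcon
    push_neg at hcon
    have := key ((G (u + v) - G u - G v)/3) (by linarith)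
    linarith
  -- positive homogeneity
  have hGsmul_le : ∀ (c : ℝ), 0 < c → ∀ u : X, G (c • u) ≤ c * G u := by
    intro c hc u
    have key : ∀ ε : ℝ, 0 < ε → G (c • u) ≤ c * (G u + ε) := by
      intro ε hε
      obtain ⟨t, ht, a, ha, hta⟩ := happrox u ε hε
      have h1 : f (x + (t/c) • (c • u)) = (a : EReal) := by
        rw [smul_smul, div_mul_cancel₀ t hc.ne']; exact ha
      have h2 := hGle (c • u) (t/c) (by positivity) a h1.le
      have h3 : (a - r + l)/(t/c) = c * ((a - r + l)/t) := by
        field_simp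
      rw [h3] at h2
      calc G (c • u) ≤ c * ((a - r + l)/t) := h2
        _ ≤ c * (G u + ε) := mul_le_mul_of_nonneg_left hta hc.le
    by_contra hcon
    push_neg at hcon
    have hε : (0:ℝ) < (G (c • u) - c * G u)/(2*c) := div_pos (by linarith) (by positivity)
    have := key _ hε
    have h5 : c * ((G (c • u) - c * G u)/(2*c)) = (G (c • u) - c * G u)/2 := by
      field_simp
    nlinarith
  have hGsmul : ∀ (c : ℝ), 0 < c → ∀ u : X, G (c • u) = c * G u := by
    intro c hc u
    refine le_antisymm (hGsmul_le c hc u) ?_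
    have h1 := hGsmul_le c⁻¹ (by positivity) (c • u)
    rw [smul_smul, inv_mul_cancel₀ hc.ne', one_smul] at h1
    have h2 := mul_le_mul_of_nonneg_left h1 hc.le
    rw [← mul_assoc, mul_inv_cancel₀ hc.ne', one_mul] at h2
    linarith
  -- bound on V
  have hGV : ∀ u ∈ V, G u ≤ 1 + l := by
    intro u hu
    have h1 : f (x + (1:ℝ) • u) ≤ ((r + 1 : ℝ) : EReal) := by
      rw [one_smul]; exact (hVf u hu).2.le
    have := hGle u 1 one_pos (r + 1) h1
    simpa using this
  -- membership characterization
  have hmemS : ∀ p : WeakDual ℝ X, p ∈ S ↔ ∀ u : X, (p u : ℝ) ≤ G u := by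
    intro p
    constructor
    · intro hp u
      have h1 : ∀ t : ℝ, 0 < t → ((p u : ℝ) : EReal) ≤ φ u t := by
        intro t ht
        have h2 := hp (x + t • u)
        have h3 : ((p (x + t • u) : ℝ) : EReal) - ((p x : ℝ) : EReal)
            = ((t * p u : ℝ) : EReal) := by
          rw [← EReal.coe_sub]
          norm_cast
          rw [map_add, map_smul, smul_eq_mul]
          ring
        rw [h3] at h2
        have h4 := hmul_le t⁻¹ (by positivity) _ _ h2
        have h5 : ((t⁻¹ : ℝ) : EReal) * ((t * p u : ℝ) : EReal) = ((p u : ℝ) : EReal) := by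
          rw [← EReal.coe_mul]
          norm_cast
          field_simp
        rw [h5] at h4
        exact h4
      have h6 : ((p u : ℝ) : EReal) ≤ ⨅ lam : Ioi (0:ℝ), φ u lam.1 :=
        le_iInf fun lam => h1 lam.1 lam.2
      rw [hG u] at h6
      exact_mod_cast h6
    · intro hp y
      have h1 : ((p y : ℝ) : EReal) - ((p x : ℝ) : EReal)
          = ((p (y - x) : ℝ) : EReal) := by
        rw [← EReal.coe_sub, map_sub]
      rw [h1]
      have h2 : ((p (y - x) : ℝ) : EReal) ≤ ((G (y - x) : ℝ) : EReal) := by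
        exact_mod_cast hp (y - x)
      refine h2.trans ?_
      have h3 : ((G (y - x) : ℝ) : EReal) ≤ φ (y - x) 1 :=
        hG (y - x) ▸ hIle (y - x) 1 one_pos
      refine h3.trans_eq ?_
      rw [hφ]
      norm_num
  -- continuity of dominated linear maps
  have hWnhds : V ∩ (Neg.neg ⁻¹' V) ∈ 𝓝 (0 : X) := by
    refine Filter.inter_mem hV0 ?_
    exact continuous_neg.continuousAt.preimage_mem_nhds (by simpa using hV0)
  have hcont_of : ∀ g : X →ₗ[ℝ] ℝ, (∀ u, g u ≤ G u) → Continuous g := by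
    intro g hg
    have hbdd : ∀ u ∈ V ∩ (Neg.neg ⁻¹' V), |g u| ≤ 1 + l := by
      intro u hu
      rw [abs_le]
      constructor
      · have h1 := (hg (-u)).trans (hGV (-u) hu.2)
        rw [map_neg] at h1
        linarith
      · exact (hg u).trans (hGV u hu.1)
    have hat : ContinuousAt g 0 := by
      rw [ContinuousAt, map_zero, Metric.tendsto_nhds]
      intro ε hε
      have hδpos : (0:ℝ) < ε/(2 + l) := by positivity
      have hδ : (ε/(2 + l)) • (V ∩ (Neg.neg ⁻¹' V)) ∈ 𝓝 (0 : X) :=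
        (set_smul_mem_nhds_zero_iff hδpos.ne').mpr hWnhds
      filter_upwards [hδ] with u hu
      obtain ⟨w, hw, rfl⟩ := hu
      rw [map_smul, smul_eq_mul, Real.dist_eq, sub_zero, abs_mul, abs_of_pos hδpos]
      have h1 := hbdd w hw
      have h2 : (ε/(2 + l)) * |g w| ≤ (ε/(2 + l)) * (1 + l) :=
        mul_le_mul_of_nonneg_left h1 hδpos.le
      refine h2.trans_lt ?_
      rw [div_mul_eq_mul_div, div_lt_iff₀ (by positivity)]
      nlinarith
    exact continuous_of_continuousAt_zero g.toAddMonoidHom (by simpa using hat)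
  have hbuild : ∀ g : X →ₗ[ℝ] ℝ, (∀ u, g u ≤ G u) →
      ∃ p : WeakDual ℝ X, p ∈ S ∧ ∀ u, (p u : ℝ) = g u := by
    intro g hg
    refine ⟨((⟨g, hcont_of g hg⟩ : X →L[ℝ] ℝ) : WeakDual ℝ X), ?_, fun u => rfl⟩
    apply (hmemS _).mpr
    intro u
    exact hg u
  -- nonemptiness via Hahn-Banach
  have hne : S.Nonempty := by
    have hex := exists_extension_of_le_sublinear (⟨⊥, 0⟩ : X →ₗ.[ℝ] ℝ) G
      (fun c hc u => hGsmul c hc u) hGadd (fun z => by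
        have hz0 : (z : X) = 0 := (Submodule.mem_bot ℝ).mp z.2
        show (0 : (⊥ : Submodule ℝ X) →ₗ[ℝ] ℝ) z ≤ G (z : X)
        rw [hz0, hG0]
        simp)
    obtain ⟨g, -, hg⟩ := hex
    obtain ⟨p, hp, -⟩ := hbuild g hg
    exact ⟨p, hp⟩
  -- exact support: for each u there is p ∈ S with p u = G u
  have hsup : ∀ u : X, ∃ p ∈ S, (p u : ℝ) = G u := by
    intro u
    by_cases hu : u = 0
    · obtain ⟨p, hp⟩ := hne
      exact ⟨p, hp, by rw [hu, map_zero, hG0]⟩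
    · set f₀ := LinearPMap.mkSpanSingleton (K := ℝ) (σ := RingHom.id ℝ) u (G u) hu with hf₀def
      have hf₀ : ∀ z : f₀.domain, f₀ z ≤ G z := by
        rintro ⟨z, hz⟩
        obtain ⟨c, rfl⟩ := Submodule.mem_span_singleton.mp hz
        have happ : f₀ ⟨c • u, hz⟩ = c • G u :=
          LinearPMap.mkSpanSingleton'_apply _ _ _ c hz
        rw [happ, smul_eq_mul]
        rcases lt_trichotomy c 0 with h | h | h
        · have e1 : G (c • u) = (-c) * G (-u) := by
            rw [show c • u = (-c) • (-u) by simp, hGsmul (-c) (by linarith)]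
          have e2 : 0 ≤ G u + G (-u) := by
            have h2 := hGadd u (-u)
            rw [add_neg_cancel, hG0] at h2
            linarith
          rw [e1]
          nlinarith
        · subst h
          have hz0 : ((0:ℝ) • u) = (0:X) := zero_smul ℝ u
          calc (0:ℝ) * G u = 0 := by ring
            _ ≤ G ((0:ℝ) • u) := by rw [hz0, hG0]
        · rw [hGsmul c h u]
      obtain ⟨g, hg1, hg2⟩ := exists_extension_of_le_sublinear f₀ G
        (fun c hc v => hGsmul c hc v) hGadd hf₀
      obtain ⟨p, hp, hpg⟩ := hbuild g hg2
      refine ⟨p, hp, ?_⟩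
      rw [hpg u]
      have hu_mem : u ∈ f₀.domain := Submodule.mem_span_singleton_self u
      have h1 := hg1 ⟨u, hu_mem⟩
      rw [h1]
      exact LinearPMap.mkSpanSingleton_apply ℝ ℝ (σ := RingHom.id ℝ) hu (G u)
  -- convexity
  have hconvS : Convex ℝ S := by
    intro p hp q hq a b ha hb hab
    rw [hmemS] at hp hq ⊢
    intro u
    have h1 : ((a • p + b • q : WeakDual ℝ X) u : ℝ) = a * p u + b * q u := rfl
    rw [h1]
    calc a * p u + b * q u ≤ a * G u + b * G u :=
          add_le_add (mul_le_mul_of_nonneg_left (hp u) ha)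
            (mul_le_mul_of_nonneg_left (hq u) hb)
      _ = G u := by rw [← add_mul, hab, one_mul]
  -- compactness
  have hcomp : IsCompact S := by
    have e : Topology.IsEmbedding (fun (p : WeakDual ℝ X) (u : X) => (p u : ℝ)) :=
      WeakBilin.isEmbedding (B := ContinuousLinearMap.coeLM ℝ) ContinuousLinearMap.coe_injective
    set K : Set (X → ℝ) := {h | (∀ u v, h (u + v) = h u + h v) ∧
      (∀ (c : ℝ) (u : X), h (c • u) = c * h u) ∧ ∀ u, h u ≤ G u} with hKdef
    have himg : (fun (p : WeakDual ℝ X) (u : X) => (p u : ℝ)) '' S = K := by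
      apply Subset.antisymm
      · rintro _ ⟨p, hp, rfl⟩
        exact ⟨fun u v => map_add p u v,
          fun c u => by simp, (hmemS p).mp hp⟩
      · rintro h ⟨h1, h2, h3⟩
        have g : X →ₗ[ℝ] ℝ :=
          { toFun := h, map_add' := h1, map_smul' := fun c u => by simp [h2, smul_eq_mul] }
        obtain ⟨p, hp, hpg⟩ := hbuild
          { toFun := h, map_add' := h1,
            map_smul' := fun c u => by simp [h2, smul_eq_mul] } h3
        exact ⟨p, hp, funext fun u => hpg u⟩
    have hKsub : K ⊆ Set.pi univ (fun u => Icc (-(G (-u))) (G u)) := by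
      rintro h ⟨h1, h2, h3⟩ u -
      refine ⟨?_, h3 u⟩
      have hneg : h (-u) = -(h u) := by
        have := h2 (-1) u
        simpa using this
      have h4 := h3 (-u)
      rw [hneg] at h4
      linarith
    have hKclosed : IsClosed K := by
      have c1 : IsClosed {h : X → ℝ | ∀ u v, h (u + v) = h u + h v} := by
        have : {h : X → ℝ | ∀ u v, h (u + v) = h u + h v}
            = ⋂ (u : X) (v : X), {h : X → ℝ | h (u + v) = h u + h v} := by
          ext h; simp
        rw [this]
        exact isClosed_iInter fun u => isClosed_iInter fun v =>
          isClosed_eq (continuous_apply (u + v)) ((continuous_apply u).add (continuous_apply v))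
      have c2 : IsClosed {h : X → ℝ | ∀ (c : ℝ) (u : X), h (c • u) = c * h u} := by
        have : {h : X → ℝ | ∀ (c : ℝ) (u : X), h (c • u) = c * h u}
            = ⋂ (c : ℝ) (u : X), {h : X → ℝ | h (c • u) = c * h u} := by
          ext h; simp
        rw [this]
        exact isClosed_iInter fun c => isClosed_iInter fun u =>
          isClosed_eq (continuous_apply _) (continuous_const.mul (continuous_apply _))
      have c3 : IsClosed {h : X → ℝ | ∀ u, h u ≤ G u} := by
        have : {h : X → ℝ | ∀ u, h u ≤ G u} = ⋂ (u : X), {h : X → ℝ | h u ≤ G u} := by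
          ext h; simp
        rw [this]
        exact isClosed_iInter fun u => isClosed_le (continuous_apply _) continuous_const
      have : K = {h : X → ℝ | ∀ u v, h (u + v) = h u + h v}
          ∩ ({h : X → ℝ | ∀ (c : ℝ) (u : X), h (c • u) = c * h u}
            ∩ {h : X → ℝ | ∀ u, h u ≤ G u}) := by
        ext h
        constructor
        · intro hh
          exact ⟨hh.1, hh.2.1, hh.2.2⟩
        · intro hh
          exact ⟨hh.1, hh.2.1, hh.2.2⟩
      rw [this]
      exact c1.inter (c2.inter c3)
    have hKcomp : IsCompact K :=
      (isCompact_univ_pi fun u => isCompact_Icc).of_isClosed_subset hKclosed hKsub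
    exact e.isCompact_iff.mpr (by rw [himg]; exact hKcomp)
  refine ⟨hne, hconvS, hcomp, ?_⟩
  intro u
  have hrw : (⨅ lam : Ioi (0:ℝ), (((lam.1)⁻¹ : ℝ) : EReal) * (f (x + lam.1 • u) - f x + (l : EReal)))
      = ⨅ lam : Ioi (0:ℝ), φ u lam.1 := by
    rw [hφ]
  rw [hrw, hG u]
  refine le_antisymm ?_ ?_
  · refine iSup₂_le fun p hp => ?_
    exact EReal.coe_le_coe_iff.mpr ((hmemS p).mp hp u)
  · obtain ⟨p, hp, hpu⟩ := hsup u
    have h1 : ((p u : ℝ) : EReal) ≤ ⨆ p ∈ S, ((p u : ℝ) : EReal) :=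
      le_iSup₂ (f := fun (p : WeakDual ℝ X) (_ : p ∈ S) => ((p u : ℝ) : EReal)) p hp
    calc ((G u : ℝ) : EReal) = ((p u : ℝ) : EReal) := by rw [hpu]
      _ ≤ _ := h1
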